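/- Let h(z) = Σ_{k=0}^∞ a_k z^k and g(z) = Σ_{k=1}^∞ b_k z^k be analytic on the unit disk 𝔻 with |h(z)| ≤ 1 and |g'(z)| ≤ |h'(z)| for all z ∈ 𝔻. Then for every r with 0 ≤ r ≤ 1/5 and every z ∈ ℂ with |z| ≤ r, |a_0| + Σ_{k=1}^∞ (|a_k| + |b_k|) r^k + |h(z) − a_0|² ≤ 1. -/

import Mathlib

open Metric Complex Filter Set FormalMultilinearSeries

namespace Stmt6Aux

/-- `u` is a power-series coefficient family for `F` on the unit ball. -/
def HS (u : ℕ → ℂ) (F : ℂ → ℂ) : Prop :=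
  ∀ z ∈ ball (0:ℂ) 1, HasSum (fun n => u n * z ^ n) (F z)

theorem eball_eq : Metric.eball (0:ℂ) 1 = ball (0:ℂ) 1 := by
  rw [← ENNReal.ofReal_one, Metric.emetric_ball]

theorem HS.summable_abs {u : ℕ → ℂ} {F : ℂ → ℂ} (hu : HS u F) {s : ℝ}
    (hs0 : 0 ≤ s) (hs : s < 1) : Summable (fun n => ‖u n‖ * s ^ n) := by
  set t : ℝ := (s + 1) / 2 with ht
  have hst : s < t := by simp [ht]; linarith
  have ht1 : t < 1 := by simp [ht]; linarith
  have ht0 : 0 < t := by simp [ht]; linarith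
  have hz : (t : ℂ) ∈ ball (0:ℂ) 1 := by
    simp [Complex.norm_real, abs_of_pos ht0, ht1]
  have hsum := (hu _ hz).summable
  have htend : Filter.Tendsto (fun n => ‖u n * (t:ℂ) ^ n‖) atTop (nhds 0) := by
    simpa using hsum.tendsto_atTop_zero.norm
  obtain ⟨C, hC⟩ := htend.bddAbove_range
  have hC' : ∀ n, ‖u n‖ * t ^ n ≤ C := by
    intro n
    have := hC (Set.mem_range_self n)
    simpa [norm_mul, norm_pow, Complex.norm_real,
      abs_of_pos ht0] using this
  have hgeom : Summable (fun n : ℕ => C * (s / t) ^ n) :=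
    (summable_geometric_of_lt_one (by positivity) (by rwa [div_lt_one ht0])).mul_left C
  refine hgeom.of_nonneg_of_le (fun n => by positivity) (fun n => ?_)
  have h1 : ‖u n‖ * s ^ n = (‖u n‖ * t ^ n) * (s / t) ^ n := by
    rw [div_pow s t n, mul_assoc, mul_div_assoc', mul_div_right_comm, div_self (pow_ne_zero _ ht0.ne'), one_mul]
  rw [h1]
  exact mul_le_mul_of_nonneg_right (hC' n) (by positivity)

theorem HS.hasFPowerSeriesOnBall {u : ℕ → ℂ} {F : ℂ → ℂ} (hu : HS u F) :
    HasFPowerSeriesOnBall F (ofScalars ℂ u) 0 1 := by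
  constructor
  · refine ENNReal.le_of_forall_nnreal_lt (fun ρ hρ => ?_)
    refine le_radius_of_summable_norm _ ?_
    have hρ1 : (ρ : ℝ) < 1 := by exact_mod_cast ENNReal.coe_lt_coe.mp (by simpa using hρ)
    have heq : (fun n => ‖ofScalars ℂ u n‖ * (ρ:ℝ) ^ n) = fun n => ‖u n‖ * (ρ:ℝ) ^ n := by
      funext n; rw [ofScalars_norm]
    rw [heq]
    exact hu.summable_abs ρ.coe_nonneg hρ1
  · exact one_pos
  · intro y hy
    have hy' : y ∈ ball (0:ℂ) 1 := by rw [← eball_eq]; exact hy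
    have heq : (fun n => (ofScalars ℂ u n) fun _ => y) = fun n => u n * y ^ n := by
      funext n; rw [ofScalars_apply_eq, smul_eq_mul]
    rw [zero_add, heq]
    exact hu y hy'

theorem HS.differentiableOn {u : ℕ → ℂ} {F : ℂ → ℂ} (hu : HS u F) :
    DifferentiableOn ℂ F (ball (0:ℂ) 1) := by
  have h := hu.hasFPowerSeriesOnBall.differentiableOn
  rwa [eball_eq] at h

/-- Canonical coefficients. -/
noncomputable def cf (F : ℂ → ℂ) (n : ℕ) : ℂ := iteratedDeriv n F 0 / n.factorial

theorem HS.eq_cf {u : ℕ → ℂ} {F : ℂ → ℂ} (hu : HS u F) : u = cf F := by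
  funext n
  have h := hu.hasFPowerSeriesOnBall.factorial_smul (1 : ℂ) n
  have h1 : (ofScalars ℂ u n fun _ => (1:ℂ)) = u n := by
    rw [ofScalars_apply_eq]; simp
  rw [h1] at h
  have h2 : iteratedDeriv n F 0 = n.factorial • u n := by
    rw [iteratedDeriv_eq_iteratedFDeriv, ← h]
  rw [cf, h2]
  have : (n.factorial : ℂ) ≠ 0 := by exact_mod_cast n.factorial_ne_zero
  field_simp [nsmul_eq_mul]
  rw [nsmul_eq_mul, mul_comm]

theorem HS_cf {F : ℂ → ℂ} (hF : DifferentiableOn ℂ F (ball (0:ℂ) 1)) : HS (cf F) F := by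
  intro z hz
  rw [mem_ball_zero_iff] at hz
  set s : ℝ := ‖z‖
  have hs0 : (0:ℝ) ≤ s := norm_nonneg z
  set t : NNReal := ⟨(s + 1) / 2, by positivity⟩ with htdef
  have htR : (t : ℝ) = (s + 1) / 2 := rfl
  have hst : s < t := by rw [htR]; linarith
  have ht1 : (t : ℝ) < 1 := by rw [htR]; linarith
  have ht0 : 0 < t := by
    rw [← NNReal.coe_lt_coe, htR]; simpa using by positivity
  have hsub : closedBall (0:ℂ) t ⊆ ball (0:ℂ) 1 := by
    intro w hw
    rw [mem_closedBall_zero_iff] at hw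
    rw [mem_ball_zero_iff]
    exact lt_of_le_of_lt hw ht1
  have hq := (hF.mono hsub).hasFPowerSeriesOnBall ht0
  set q := cauchyPowerSeries F 0 t with hqdef
  have hzmem : z ∈ Metric.eball (0:ℂ) t := by
    rw [Metric.emetric_ball_nnreal, mem_ball_zero_iff]
    exact hst
  have hsum := hq.hasSum hzmem
  have hcoeff : ∀ n, q.coeff n = cf F n := by
    intro n
    have h := hq.factorial_smul (1 : ℂ) n
    have h1 : (q n fun _ => (1:ℂ)) = q.coeff n := by
      rw [FormalMultilinearSeries.apply_eq_pow_smul_coeff]; simp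
    rw [h1] at h
    have h2 : iteratedDeriv n F 0 = n.factorial • q.coeff n := by
      rw [iteratedDeriv_eq_iteratedFDeriv, ← h]
    rw [cf, h2]
    have : (n.factorial : ℂ) ≠ 0 := by exact_mod_cast n.factorial_ne_zero
    field_simp [nsmul_eq_mul]
    rw [nsmul_eq_mul, mul_comm]
  have : (fun n => q n fun _ => z) = fun n => cf F n * z ^ n := by
    funext n
    rw [FormalMultilinearSeries.apply_eq_pow_smul_coeff, hcoeff n, smul_eq_mul, mul_comm]
  rw [this, zero_add] at hsum
  exact hsum

theorem HS.unique {u v : ℕ → ℂ} {F : ℂ → ℂ} (hu : HS u F) (hv : HS v F) : u = v := by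
  rw [hu.eq_cf, hv.eq_cf]

theorem HS.derivCoeff {u : ℕ → ℂ} {F : ℂ → ℂ} (hu : HS u F) :
    HS (fun n : ℕ => ((n : ℂ) + 1) * u (n + 1)) (_root_.deriv F) := by
  have hdF : DifferentiableOn ℂ (_root_.deriv F) (ball (0:ℂ) 1) :=
    ((hu.differentiableOn.analyticOnNhd isOpen_ball).deriv).differentiableOn
  have h1 : HS (cf (_root_.deriv F)) (_root_.deriv F) := HS_cf hdF
  have h2 : (fun n : ℕ => ((n : ℂ) + 1) * u (n + 1)) = cf (_root_.deriv F) := by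
    funext n
    have hu' := congrFun hu.eq_cf (n + 1)
    rw [hu']
    rw [cf, cf, ← iteratedDeriv_succ']
    have h3 : ((n+1).factorial : ℂ) = ((n : ℂ) + 1) * n.factorial := by
      rw [Nat.factorial_succ]; push_cast; ring
    rw [h3]
    have h4 : (n.factorial : ℂ) ≠ 0 := by exact_mod_cast n.factorial_ne_zero
    have h5 : ((n : ℂ) + 1) ≠ 0 := Nat.cast_add_one_ne_zero n
    field_simp
  rw [h2]
  exact h1

theorem normSq_mobius (w0 w : ℂ) :
    normSq (1 - (starRingEnd ℂ) w0 * w) - normSq (w0 - w)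
      = (1 - normSq w0) * (1 - normSq w) := by
  simp only [normSq_apply, Complex.sub_re, Complex.sub_im, Complex.mul_re, Complex.mul_im,
    Complex.one_re, Complex.one_im, Complex.conj_re, Complex.conj_im]
  ring

theorem mobius_lt_one {w0 w : ℂ} (h0 : ‖w0‖ < 1) (hw : ‖w‖ < 1) :
    ‖(w0 - w) / (1 - (starRingEnd ℂ) w0 * w)‖ < 1 := by
  have hn0 : normSq w0 < 1 := by
    rw [Complex.normSq_eq_norm_sq]
    nlinarith [norm_nonneg w0]
  have hnw : normSq w < 1 := by
    rw [Complex.normSq_eq_norm_sq]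
    nlinarith [norm_nonneg w]
  have key : normSq (w0 - w) < normSq (1 - (starRingEnd ℂ) w0 * w) := by
    have h := normSq_mobius w0 w
    nlinarith [normSq_nonneg (w0 - w)]
  have hden : (1 - (starRingEnd ℂ) w0 * w) ≠ 0 := by
    intro hc
    rw [hc] at key
    simpa using lt_of_le_of_lt (normSq_nonneg _) key
  rw [norm_div, div_lt_one (norm_pos_iff.mpr hden)]
  rw [Complex.normSq_eq_norm_sq, Complex.normSq_eq_norm_sq] at key
  exact lt_of_pow_lt_pow_left₀ 2 (norm_nonneg _) key

/-- Schwarz–Pick inequality at the origin. -/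
theorem schwarz_pick_zero {F : ℂ → ℂ} (hd : DifferentiableOn ℂ F (ball (0:ℂ) 1))
    (hb : ∀ z ∈ ball (0:ℂ) 1, ‖F z‖ ≤ 1) :
    ‖deriv F 0‖ ≤ 1 - ‖F 0‖ ^ 2 := by
  have key : ∀ t : ℝ, 0 < t → t < 1 → t^2 * ‖deriv F 0‖ ≤ 1 - t^2 * ‖F 0‖^2 := by
    intro t ht0 ht1
    set G : ℂ → ℂ := fun z => (t:ℂ) * F ((t:ℂ) * z) with hGdef
    have hmapst : ∀ z : ℂ, z ∈ ball (0:ℂ) 1 → (t:ℂ) * z ∈ ball (0:ℂ) 1 := by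
      intro z hz
      rw [mem_ball_zero_iff] at hz ⊢
      rw [norm_mul, Complex.norm_real, Real.norm_eq_abs, abs_of_pos ht0]
      nlinarith [norm_nonneg z]
    have hGd : DifferentiableOn ℂ G (ball (0:ℂ) 1) := by
      apply DifferentiableOn.const_mul
      exact DifferentiableOn.comp hd
        ((differentiable_id.const_mul _).differentiableOn) hmapst
    have hGb : ∀ z ∈ ball (0:ℂ) 1, ‖G z‖ ≤ t := by
      intro z hz
      rw [hGdef]
      calc ‖(t:ℂ) * F ((t:ℂ)*z)‖ = t * ‖F ((t:ℂ)*z)‖ := by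
            rw [norm_mul, Complex.norm_real, Real.norm_eq_abs, abs_of_pos ht0]
        _ ≤ t * 1 := by
            exact mul_le_mul_of_nonneg_left (hb _ (hmapst z hz)) ht0.le
        _ = t := mul_one t
    set w0 : ℂ := G 0 with hw0def
    have hw0 : ‖w0‖ ≤ t := hGb 0 (by simp [mem_ball_zero_iff])
    have hw01 : ‖w0‖ < 1 := lt_of_le_of_lt hw0 ht1
    clear_value w0
    set m : ℂ → ℂ := fun w => (w0 - w) / (1 - (starRingEnd ℂ) w0 * w) with hmdef
    set φ : ℂ → ℂ := fun z => m (G z) with hφdef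
    have hφ0 : φ 0 = 0 := by
      rw [hφdef]; simp only [hmdef, ← hw0def, sub_self, zero_div]
    have hden : ∀ w : ℂ, ‖w‖ < 1 → (1 - (starRingEnd ℂ) w0 * w) ≠ 0 := by
      intro w hw hc
      have h1 : ‖(starRingEnd ℂ) w0 * w‖ < 1 := by
        rw [norm_mul, RCLike.norm_conj]
        nlinarith [norm_nonneg w0, norm_nonneg w]
      have h2 : (1:ℂ) = (starRingEnd ℂ) w0 * w := by linear_combination hc
      rw [← h2] at h1
      simp at h1
    have hφd : DifferentiableOn ℂ φ (ball (0:ℂ) 1) := by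
      apply DifferentiableOn.div
      · exact (differentiableOn_const _).sub hGd
      · exact (differentiableOn_const _).sub ((differentiableOn_const _).mul hGd)
      · intro z hz
        exact hden (G z) (lt_of_le_of_lt (hGb z hz) ht1)
    have hφmaps : MapsTo φ (ball (0:ℂ) 1) (ball (φ 0) 1) := by
      intro z hz
      rw [hφ0, mem_ball_zero_iff]
      exact mobius_lt_one hw01 (lt_of_le_of_lt (hGb z hz) ht1)
    have hschwarz : ‖deriv φ 0‖ ≤ 1 / 1 :=
      Complex.norm_deriv_le_div_of_mapsTo_ball hφd (hφmaps.mono_right ball_subset_closedBall) one_pos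
    -- derivative computations
    have hGat : DifferentiableAt ℂ G 0 :=
      hGd.differentiableAt (isOpen_ball.mem_nhds (by simp [mem_ball_zero_iff]))
    have hmD : HasDerivAt m (-(1 - (starRingEnd ℂ) w0 * w0)⁻¹) w0 := by
      have h1 : HasDerivAt (fun w : ℂ => w0 - w) (-1) w0 := by
        simpa using (hasDerivAt_id w0).const_sub w0
      have h2 : HasDerivAt (fun w : ℂ => 1 - (starRingEnd ℂ) w0 * w)
          (-((starRingEnd ℂ) w0)) w0 := by
        simpa using ((hasDerivAt_id w0).const_mul ((starRingEnd ℂ) w0)).const_sub 1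
      have h3 := h1.div h2 (hden w0 hw01)
      refine h3.congr_deriv ?_
      rw [sub_self, zero_mul, sub_zero]
      have hD : (1 - (starRingEnd ℂ) w0 * w0) ≠ 0 := hden w0 hw01
      field_simp
    have hGD : HasDerivAt G (deriv G 0) 0 := hGat.hasDerivAt
    have hcomp : HasDerivAt φ (-(1 - (starRingEnd ℂ) w0 * w0)⁻¹ * deriv G 0) 0 := by
      have hmD' : HasDerivAt m (-(1 - (starRingEnd ℂ) w0 * w0)⁻¹) (G 0) := hw0def ▸ hmD
      have := hmD'.comp 0 hGD
      exact this
    have hderivφ : deriv φ 0 = -(1 - (starRingEnd ℂ) w0 * w0)⁻¹ * deriv G 0 := hcomp.deriv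
    -- deriv G 0 = t^2 * deriv F 0
    have hFat : DifferentiableAt ℂ F 0 :=
      hd.differentiableAt (isOpen_ball.mem_nhds (by simp [mem_ball_zero_iff]))
    have hGD2 : HasDerivAt G ((t:ℂ)^2 * deriv F 0) 0 := by
      have hin : HasDerivAt (fun z : ℂ => (t:ℂ) * z) (t:ℂ) 0 := by
        simpa using (hasDerivAt_id (0:ℂ)).const_mul (t:ℂ)
      have hout : HasDerivAt F (deriv F 0) ((t:ℂ) * 0) := by
        simpa using hFat.hasDerivAt
      have := (hout.comp 0 hin).const_mul (t:ℂ)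
      refine this.congr_deriv ?_
      ring
    have hderivG : deriv G 0 = (t:ℂ)^2 * deriv F 0 := hGD2.deriv
    -- norm of 1 - conj w0 * w0
    have hmod : ‖(1 - (starRingEnd ℂ) w0 * w0)‖ = 1 - ‖w0‖^2 := by
      have h1 : (starRingEnd ℂ) w0 * w0 = (normSq w0 : ℂ) := by
        rw [mul_comm, Complex.mul_conj]
      rw [h1]
      have h2 : ((1:ℂ) - (normSq w0 : ℂ)) = ((1 - normSq w0 : ℝ) : ℂ) := by push_cast; ring
      rw [h2, Complex.norm_real, Real.norm_eq_abs]
      have h4 : normSq w0 = ‖w0‖^2 := by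
        rw [Complex.normSq_eq_norm_sq]
      rw [h4, _root_.abs_of_nonneg (by nlinarith [norm_nonneg w0])]
    have hfinal : ‖deriv G 0‖ ≤ 1 - ‖w0‖^2 := by
      have h1 : ‖deriv φ 0‖ = ‖deriv G 0‖ / (1 - ‖w0‖^2) := by
        rw [hderivφ, norm_mul, norm_neg, norm_inv, hmod, div_eq_inv_mul]
      have hpos : 0 < 1 - ‖w0‖^2 := by nlinarith [norm_nonneg w0]
      rw [h1, div_le_iff₀ hpos, one_div_one] at hschwarz
      · linarith [hschwarz]
    have hnormG : ‖deriv G 0‖ = t^2 * ‖deriv F 0‖ := by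
      rw [hderivG, norm_mul, norm_pow, Complex.norm_real, Real.norm_eq_abs, abs_of_pos ht0]
    have hnormw0 : ‖w0‖ = t * ‖F 0‖ := by
      rw [hw0def, hGdef]
      simp only [mul_zero]
      rw [norm_mul, Complex.norm_real, Real.norm_eq_abs, abs_of_pos ht0]
    rw [hnormG, hnormw0] at hfinal
    nlinarith [hfinal]
  -- limit t → 1
  have htend : Tendsto (fun t : ℝ => 1 / t^2 - ‖F 0‖^2) (nhdsWithin 1 (Iio 1))
      (nhds (1 - ‖F 0‖^2)) := by
    have : ContinuousAt (fun t : ℝ => 1 / t^2 - ‖F 0‖^2) 1 := by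
      apply ContinuousAt.sub _ continuousAt_const
      apply ContinuousAt.div continuousAt_const (by fun_prop)
      norm_num
    simpa using this.continuousWithinAt.tendsto
  refine ge_of_tendsto htend ?_
  filter_upwards [Ioo_mem_nhdsLT_of_mem (by constructor <;> norm_num :
    (1:ℝ) ∈ Ioc (1/2) 1)] with t ht
  have h := key t (by linarith [ht.1]) ht.2
  have ht0 : (0:ℝ) < t := by linarith [ht.1]
  have h2 : ‖deriv F 0‖ ≤ (1 - t^2*‖F 0‖^2) / t^2 := by
    rw [le_div_iff₀ (by positivity)]
    linarith [h]
  have h3 : (1 - t^2*‖F 0‖^2) / t^2 = 1/t^2 - ‖F 0‖^2 := by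
    field_simp
  linarith [h2, h3.symm.le]

theorem coeff_one_bound {v : ℕ → ℂ} {Φ : ℂ → ℂ} (hv : HS v Φ)
    (hb : ∀ z ∈ ball (0:ℂ) 1, ‖Φ z‖ ≤ 1) : ‖v 1‖ ≤ 1 - ‖v 0‖ ^ 2 := by
  have hmem0 : (0:ℂ) ∈ ball (0:ℂ) 1 := by simp [mem_ball_zero_iff]
  have h0 : Φ 0 = v 0 := by
    have hs := hv 0 hmem0
    have h1 : HasSum (fun n => v n * (0:ℂ) ^ n) ((fun n => v n * (0:ℂ)^n) 0) :=
      hasSum_single 0 (fun n hn => by simp [zero_pow hn])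
    have := hs.unique h1
    simpa using this
  have h1 : deriv Φ 0 = v 1 := by
    have hs := hv.derivCoeff 0 hmem0
    have h2 : HasSum (fun n : ℕ => ((n:ℂ)+1) * v (n+1) * (0:ℂ) ^ n)
        ((fun n : ℕ => ((n:ℂ)+1) * v (n+1) * (0:ℂ)^n) 0) :=
      hasSum_single 0 (fun n hn => by simp [zero_pow hn])
    have := hs.unique h2
    simpa using this
  have := schwarz_pick_zero hv.differentiableOn hb
  rwa [h1, h0] at this

theorem coeff_bound {u : ℕ → ℂ} {F : ℂ → ℂ} (hu : HS u F)
    (hb : ∀ z ∈ ball (0:ℂ) 1, ‖F z‖ ≤ 1) (k : ℕ) (hk : 1 ≤ k) :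
    ‖u k‖ ≤ 1 - ‖u 0‖ ^ 2 := by
  have hk0 : k ≠ 0 := by omega
  set ζ : ℂ := Complex.exp (2 * Real.pi * Complex.I / k) with hζdef
  have hζ : IsPrimitiveRoot ζ k := Complex.isPrimitiveRoot_exp k hk0
  have hζk : ζ ^ k = 1 := hζ.pow_eq_one
  have hζabs : ‖ζ‖ = 1 := by
    have h1 : ‖ζ‖ ^ k = 1 := by rw [← norm_pow, hζk, norm_one]
    rcases lt_trichotomy ‖ζ‖ 1 with h | h | h
    · exfalso
      have := pow_lt_one₀ (norm_nonneg ζ) h hk0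
      rw [h1] at this; exact lt_irrefl _ this
    · exact h
    · exfalso
      have := one_lt_pow₀ h hk0
      rw [h1] at this; exact lt_irrefl _ this
  have key : ∀ w : ℂ, w ∈ ball (0:ℂ) 1 →
      ∃ S : ℂ, HasSum (fun m => u (k*m) * w ^ m) S ∧ ‖S‖ ≤ 1 := by
    intro w hw
    obtain ⟨z, hzk⟩ := IsAlgClosed.exists_pow_nat_eq w (Nat.pos_of_ne_zero hk0)
    have hz1 : ‖z‖ < 1 := by
      by_contra hc
      push_neg at hc
      rw [mem_ball_zero_iff, ← hzk, norm_pow] at hw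
      have : (1:ℝ) ≤ ‖z‖^k := one_le_pow₀ hc
      linarith
    have hmem : ∀ l : ℕ, (ζ^l * z) ∈ ball (0:ℂ) 1 := by
      intro l
      rw [mem_ball_zero_iff, norm_mul, norm_pow, hζabs, one_pow, one_mul]
      exact hz1
    have hsum1 : HasSum (fun n => ∑ l ∈ Finset.range k, u n * (ζ^l * z)^n)
        (∑ l ∈ Finset.range k, F (ζ^l * z)) :=
      hasSum_sum fun l _ => hu _ (hmem l)
    have hterm : (fun n => ∑ l ∈ Finset.range k, u n * (ζ^l * z)^n)
        = fun n => if k ∣ n then (k:ℂ) * (u n * z^n) else 0 := by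
      funext n
      have h2 : ∀ l, u n * (ζ^l*z)^n = (u n * z^n) * (ζ^n)^l := by
        intro l
        rw [mul_pow, ← pow_mul, mul_comm l n, pow_mul]
        ring
      rw [Finset.sum_congr rfl (fun l _ => h2 l), ← Finset.mul_sum]
      by_cases hdvd : k ∣ n
      · have hone : ζ^n = 1 := (hζ.pow_eq_one_iff_dvd n).mpr hdvd
        rw [if_pos hdvd, hone]
        simp
        ring
      · have hne : ζ^n ≠ 1 := fun hc => hdvd ((hζ.pow_eq_one_iff_dvd n).mp hc)
        rw [if_neg hdvd, geom_sum_eq hne]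
        have h3 : (ζ^n)^k = 1 := by rw [← pow_mul, mul_comm, pow_mul, hζk, one_pow]
        rw [h3]
        simp
    rw [hterm] at hsum1
    have hsum3 := hsum1.mul_left ((k:ℂ)⁻¹)
    have hkC : (k:ℂ) ≠ 0 := Nat.cast_ne_zero.mpr hk0
    have heq : (fun n => (k:ℂ)⁻¹ * (if k ∣ n then (k:ℂ) * (u n * z^n) else 0))
        = fun n => if k ∣ n then u n * z^n else 0 := by
      funext n
      split_ifs with hdvd
      · field_simp
      · rw [mul_zero]
    rw [heq] at hsum3
    set S : ℂ := (k:ℂ)⁻¹ * ∑ l ∈ Finset.range k, F (ζ^l * z) with hSdef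
    refine ⟨S, ?_, ?_⟩
    · have hinj : Function.Injective (fun m : ℕ => k * m) := fun a b hab => by
        exact Nat.eq_of_mul_eq_mul_left (Nat.pos_of_ne_zero hk0) hab
      have hzero : ∀ n, n ∉ Set.range (fun m : ℕ => k * m) →
          (if k ∣ n then u n * z^n else 0) = 0 := by
        intro n hn
        rw [if_neg]
        intro ⟨c, hc⟩
        exact hn ⟨c, hc.symm⟩
      have := (Function.Injective.hasSum_iff hinj hzero).mpr hsum3
      have hcomp : ((fun n => if k ∣ n then u n * z^n else 0) ∘ (fun m : ℕ => k * m))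
          = fun m => u (k*m) * w ^ m := by
        funext m
        simp only [Function.comp_apply]
        rw [if_pos (dvd_mul_right k m), pow_mul, hzk]
      rwa [hcomp] at this
    · rw [hSdef, norm_mul, norm_inv]
      have h4 : ‖∑ l ∈ Finset.range k, F (ζ^l * z)‖ ≤ (k:ℝ) := by
        calc ‖∑ l ∈ Finset.range k, F (ζ^l * z)‖ ≤ ∑ l ∈ Finset.range k, ‖F (ζ^l * z)‖ :=
              norm_sum_le _ _
          _ ≤ ∑ _l ∈ Finset.range k, (1:ℝ) :=
              Finset.sum_le_sum (fun l _ => hb _ (hmem l))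
          _ = (k:ℝ) := by simp
      have h5 : ‖(k:ℂ)‖ = (k:ℝ) := by simp
      rw [h5]
      have hkpos : (0:ℝ) < k := by exact_mod_cast Nat.pos_of_ne_zero hk0
      calc (k:ℝ)⁻¹ * ‖∑ l ∈ Finset.range k, F (ζ^l * z)‖ ≤ (k:ℝ)⁻¹ * k :=
            mul_le_mul_of_nonneg_left h4 (by positivity)
        _ = 1 := by field_simp
  set Φ : ℂ → ℂ := fun w => ∑' m, u (k*m) * w^m with hΦdef
  have hΦ : HS (fun m => u (k*m)) Φ := by
    intro w hw
    obtain ⟨S, hS, _⟩ := key w hw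
    show HasSum _ (∑' m, u (k*m) * w^m)
    rw [hS.tsum_eq]
    exact hS
  have hΦb : ∀ w ∈ ball (0:ℂ) 1, ‖Φ w‖ ≤ 1 := by
    intro w hw
    obtain ⟨S, hS, hS1⟩ := key w hw
    show ‖(∑' m, u (k*m) * w^m)‖ ≤ 1
    rw [hS.tsum_eq]
    exact hS1
  have hres := coeff_one_bound hΦ hΦb
  simpa using hres

theorem exists_omega {H G : ℂ → ℂ}
    (hH : DifferentiableOn ℂ H (ball (0:ℂ) 1))
    (hG : DifferentiableOn ℂ G (ball (0:ℂ) 1))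
    (hle : ∀ z ∈ ball (0:ℂ) 1, ‖G z‖ ≤ ‖H z‖)
    (hH0 : ∃ z ∈ ball (0:ℂ) 1, H z ≠ 0) :
    ∃ ω : ℂ → ℂ, DifferentiableOn ℂ ω (ball (0:ℂ) 1) ∧
      (∀ z ∈ ball (0:ℂ) 1, ‖ω z‖ ≤ 1) ∧
      (∀ z ∈ ball (0:ℂ) 1, G z = ω z * H z) := by
  classical
  set q : ℂ → ℂ := fun w => G w / H w with hq
  set ω : ℂ → ℂ := fun z => if H z = 0 then limUnder (nhdsWithin z {z}ᶜ) q else q z with hω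
  have hqle : ∀ w ∈ ball (0:ℂ) 1, H w ≠ 0 → ‖q w‖ ≤ 1 := by
    intro w hw hne
    rw [hq]
    simp only
    rw [norm_div, div_le_one (norm_pos_iff.mpr hne)]
    exact hle w hw
  have main : ∀ z₀ ∈ ball (0:ℂ) 1, DifferentiableAt ℂ ω z₀ ∧ ‖ω z₀‖ ≤ 1 := by
    intro z₀ hz₀
    by_cases hH0' : H z₀ = 0
    case neg =>
      -- regular point
      have hHd : DifferentiableAt ℂ H z₀ := hH.differentiableAt (isOpen_ball.mem_nhds hz₀)
      have hGd : DifferentiableAt ℂ G z₀ := hG.differentiableAt (isOpen_ball.mem_nhds hz₀)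
      have hev : ∀ᶠ w in nhds z₀, H w ≠ 0 := hHd.continuousAt.eventually_ne hH0'
      have heq : ω =ᶠ[nhds z₀] q := by
        filter_upwards [hev] with w hw
        rw [hω]
        simp only [if_neg hw]
      have hqdiff : DifferentiableAt ℂ q z₀ := hGd.div hHd hH0'
      constructor
      · exact heq.differentiableAt_iff.mpr hqdiff
      · have : ω z₀ = q z₀ := by rw [hω]; simp only [if_neg hH0']
        rw [this]
        exact hqle z₀ hz₀ hH0'
    case pos =>
      have hana : AnalyticAt ℂ H z₀ := (hH.analyticOnNhd isOpen_ball) z₀ hz₀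
      rcases hana.eventually_eq_zero_or_eventually_ne_zero with hev | hev
      · exfalso
        have hzero : Set.EqOn H 0 (ball (0:ℂ) 1) := by
          refine AnalyticOnNhd.eqOn_zero_of_preconnected_of_eventuallyEq_zero
            (hH.analyticOnNhd isOpen_ball) ((convex_ball _ _).isPreconnected) hz₀ ?_
          filter_upwards [hev] with x hx
          exact hx
        obtain ⟨w, hw, hwne⟩ := hH0
        exact hwne (hzero hw)
      · rw [eventually_nhdsWithin_iff] at hev
        have hcomb : ∀ᶠ w in nhds z₀, (w ∈ ({z₀}ᶜ : Set ℂ) → H w ≠ 0) ∧ w ∈ ball (0:ℂ) 1 :=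
          hev.and (isOpen_ball.eventually_mem hz₀)
        obtain ⟨U, hU, hUopen, hz₀U⟩ := _root_.eventually_nhds_iff.mp hcomb
        have hUnhds : U ∈ nhds z₀ := hUopen.mem_nhds hz₀U
        have hUball : U ⊆ ball (0:ℂ) 1 := fun w hw => (hU w hw).2
        have hUne : ∀ w ∈ U, w ≠ z₀ → H w ≠ 0 := fun w hw hne => (hU w hw).1 hne
        have hqd : DifferentiableOn ℂ q (U \ {z₀}) := by
          intro w hw
          have hwb : w ∈ ball (0:ℂ) 1 := hUball hw.1
          have hwne : H w ≠ 0 := hUne w hw.1 (by simpa using hw.2)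
          exact (((hG.differentiableAt (isOpen_ball.mem_nhds hwb)).div
            (hH.differentiableAt (isOpen_ball.mem_nhds hwb)) hwne)).differentiableWithinAt
        have hbdd : BddAbove (norm ∘ q '' (U \ {z₀})) := by
          refine ⟨1, ?_⟩
          rintro y ⟨w, hw, rfl⟩
          exact hqle w (hUball hw.1) (hUne w hw.1 (by simpa using hw.2))
        have hupd := Complex.differentiableOn_update_limUnder_of_bddAbove hUnhds hqd hbdd
        set L : ℂ := limUnder (nhdsWithin z₀ {z₀}ᶜ) q with hL
        have hfeq : Set.EqOn ω (Function.update q z₀ L) U := by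
          intro w hw
          by_cases hwz : w = z₀
          · subst hwz
            rw [hω]
            simp only [if_pos hH0', Function.update_self, hL]
          · rw [hω]
            simp only [if_neg (hUne w hw hwz), Function.update_of_ne hwz]
        have hdiffupd : DifferentiableAt ℂ (Function.update q z₀ L) z₀ :=
          hupd.differentiableAt hUnhds
        have heved : ω =ᶠ[nhds z₀] Function.update q z₀ L :=
          Filter.eventuallyEq_of_mem hUnhds hfeq
        constructor
        · exact heved.differentiableAt_iff.mpr hdiffupd
        · have hωz₀ : ω z₀ = L := by rw [hω]; simp only [if_pos hH0', hL]
          rw [hωz₀]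
          -- L is a limit of q with ‖q‖ ≤ 1
          have hcont : ContinuousAt (Function.update q z₀ L) z₀ := hdiffupd.continuousAt
          have htendupd : Filter.Tendsto (Function.update q z₀ L)
              (nhdsWithin z₀ (U \ {z₀})) (nhds L) := by
            have := hcont.tendsto
            rw [Function.update_self] at this
            exact this.mono_left nhdsWithin_le_nhds
          have htendq : Filter.Tendsto q (nhdsWithin z₀ (U \ {z₀})) (nhds L) := by
            refine htendupd.congr' ?_
            filter_upwards [self_mem_nhdsWithin] with w hw
            rw [Function.update_of_ne (by simpa using hw.2)]
          have hne : (nhdsWithin z₀ (U \ {z₀})).NeBot := by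
            have heqf : nhdsWithin z₀ (U \ {z₀}) = nhdsWithin z₀ {z₀}ᶜ := by
              rw [Set.diff_eq, Set.inter_comm]
              exact nhdsWithin_inter_of_mem' (mem_nhdsWithin_of_mem_nhds hUnhds)
            rw [heqf]
            infer_instance
          refine le_of_tendsto htendq.norm ?_
          filter_upwards [self_mem_nhdsWithin] with w hw
          exact hqle w (hUball hw.1) (hUne w hw.1 (by simpa using hw.2))
  refine ⟨ω, ?_, ?_, ?_⟩
  · exact fun z hz => ((main z hz).1).differentiableWithinAt
  · exact fun z hz => (main z hz).2
  · intro z hz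
    by_cases hz0 : H z = 0
    · have : G z = 0 := by
        have := hle z hz
        rw [hz0, norm_zero] at this
        exact norm_le_zero_iff.mp this
      rw [this, hz0, mul_zero]
    · rw [hω]
      simp only [if_neg hz0]
      rw [hq]
      field_simp

theorem HS.mul {u v : ℕ → ℂ} {F G : ℂ → ℂ} (hu : HS u F) (hv : HS v G) :
    HS (fun n => ∑ p ∈ Finset.HasAntidiagonal.antidiagonal n, u p.1 * v p.2) (fun z => F z * G z) := by
  intro z hz
  have hz1 : ‖z‖ < 1 := mem_ball_zero_iff.mp hz
  have hu1 : Summable (fun n => ‖u n * z ^ n‖) := by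
    have := hu.summable_abs (norm_nonneg z) hz1
    simpa [norm_mul, norm_pow] using this
  have hv1 : Summable (fun n => ‖v n * z ^ n‖) := by
    have := hv.summable_abs (norm_nonneg z) hz1
    simpa [norm_mul, norm_pow] using this
  have hsummable : Summable (fun n => ∑ p ∈ Finset.HasAntidiagonal.antidiagonal n,
      (u p.1 * z^p.1) * (v p.2 * z^p.2)) :=
    (summable_norm_sum_mul_antidiagonal_of_summable_norm hu1 hv1).of_norm
  have htsum := tsum_mul_tsum_eq_tsum_sum_antidiagonal_of_summable_norm hu1 hv1
  have hF := (hu z hz).tsum_eq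
  have hG := (hv z hz).tsum_eq
  have heq : (fun n => (∑ p ∈ Finset.HasAntidiagonal.antidiagonal n, u p.1 * v p.2) * z ^ n)
      = fun n => ∑ p ∈ Finset.HasAntidiagonal.antidiagonal n, (u p.1 * z^p.1) * (v p.2 * z^p.2) := by
    funext n
    rw [Finset.sum_mul]
    refine Finset.sum_congr rfl (fun p hp => ?_)
    have hpn := Finset.HasAntidiagonal.mem_antidiagonal.mp hp
    rw [← hpn, pow_add]
    ring
  rw [heq]
  have hval : F z * G z = ∑' n, ∑ p ∈ Finset.HasAntidiagonal.antidiagonal n,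
      (u p.1 * z^p.1) * (v p.2 * z^p.2) := by
    rw [← htsum, hF, hG]
  show HasSum _ (F z * G z)
  rw [hval]
  exact hsummable.hasSum

end Stmt6Aux

open Stmt6Aux

set_option maxHeartbeats 2000000

/-- If `h(z) = ∑ aₖ zᵏ` and `g(z) = ∑ bₖ zᵏ` are analytic on the unit disk with `|h| ≤ 1`
and `|g'| ≤ |h'|`, then for `0 ≤ r ≤ 1/5` and `|z| ≤ r`,
`|a₀| + ∑_{k≥1} (|aₖ| + |bₖ|) rᵏ + |h(z) - a₀|² ≤ 1`. -/
theorem stmt6 (h g : ℂ → ℂ) (a b : ℕ → ℂ) (hb0 : b 0 = 0)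
    (hha : ∀ z ∈ ball (0:ℂ) 1, HasSum (fun k => a k * z ^ k) (h z))
    (hga : ∀ z ∈ ball (0:ℂ) 1, HasSum (fun k => b k * z ^ k) (g z))
    (hhd : DifferentiableOn ℂ h (ball (0:ℂ) 1))
    (hgd : DifferentiableOn ℂ g (ball (0:ℂ) 1))
    (hb : ∀ z ∈ ball (0:ℂ) 1, ‖h z‖ ≤ 1)
    (hd : ∀ z ∈ ball (0:ℂ) 1, ‖deriv g z‖ ≤ ‖deriv h z‖)
    (r : ℝ) (hr0 : 0 ≤ r) (hr : r ≤ 1/5)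
    (z : ℂ) (hz : ‖z‖ ≤ r) :
    ‖a 0‖
      + (∑' k : ℕ, (‖a (k+1)‖ + ‖b (k+1)‖) * r ^ (k+1))
      + (‖h z - a 0‖)^2
      ≤ 1 := by
  classical
  have hr1 : r < 1 := lt_of_le_of_lt hr (by norm_num)
  have hzr : ‖z‖ ≤ r := by exact hz
  have hzball : z ∈ ball (0:ℂ) 1 := by
    rw [mem_ball_zero_iff]
    exact lt_of_le_of_lt hzr hr1
  have hbn : ∀ w ∈ ball (0:ℂ) 1, ‖h w‖ ≤ 1 := by
    intro w hw; exact hb w hw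
  have hdn : ∀ w ∈ ball (0:ℂ) 1, ‖deriv g w‖ ≤ ‖deriv h w‖ := by
    intro w hw; exact hd w hw
  have hHSa : HS a h := hha
  have hHSb : HS b g := hga
  -- |a 0| ≤ 1
  have hmem0 : (0:ℂ) ∈ ball (0:ℂ) 1 := by simp [mem_ball_zero_iff]
  have hh0 : h 0 = a 0 := by
    have hs := hHSa 0 hmem0
    have h1 : HasSum (fun n => a n * (0:ℂ) ^ n) ((fun n => a n * (0:ℂ)^n) 0) :=
      hasSum_single 0 (fun n hn => by simp [zero_pow hn])
    have := hs.unique h1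
    simpa using this
  have ha0 : ‖a 0‖ ≤ 1 := by
    rw [← hh0]; exact hbn 0 hmem0
  -- rewrite the goal in terms of norms
  by_cases hconst : ∀ w ∈ ball (0:ℂ) 1, deriv h w = 0
  case pos =>
    -- h constant, g constant: all higher coefficients vanish
    have hzeroH : HS (fun _ : ℕ => (0:ℂ)) (deriv h) := by
      intro w hw
      rw [hconst w hw]
      simpa using hasSum_zero
    have haz : ∀ n : ℕ, a (n+1) = 0 := by
      have := hHSa.derivCoeff.unique hzeroH
      intro n
      have h1 := congrFun this n
      have h5 : ((n : ℂ) + 1) ≠ 0 := Nat.cast_add_one_ne_zero n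
      exact (mul_eq_zero.mp h1).resolve_left h5
    have hzeroG : HS (fun _ : ℕ => (0:ℂ)) (deriv g) := by
      intro w hw
      have : deriv g w = 0 := by
        have := hdn w hw
        rw [hconst w hw, norm_zero] at this
        exact norm_le_zero_iff.mp this
      rw [this]
      simpa using hasSum_zero
    have hbz : ∀ n : ℕ, b (n+1) = 0 := by
      have := hHSb.derivCoeff.unique hzeroG
      intro n
      have h1 := congrFun this n
      have h5 : ((n : ℂ) + 1) ≠ 0 := Nat.cast_add_one_ne_zero n
      exact (mul_eq_zero.mp h1).resolve_left h5
    have hhz : h z = a 0 := by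
      have hs := hHSa z hzball
      have h1 : HasSum (fun n => a n * z ^ n) ((fun n => a n * z^n) 0) :=
        hasSum_single 0 (fun n hn => by
          obtain ⟨m, rfl⟩ := Nat.exists_eq_succ_of_ne_zero hn
          rw [haz m, zero_mul])
      have := hs.unique h1
      simpa using this
    have htsum0 : (∑' k : ℕ, (‖a (k+1)‖ + ‖b (k+1)‖) * r ^ (k+1)) = 0 := by
      convert tsum_zero with k
      rw [haz k, hbz k]
      simp
    rw [htsum0, hhz, sub_self, norm_zero]
    norm_num
    exact ha0
  case neg =>
    push_neg at hconst
    obtain ⟨w₀, hw₀b, hw₀⟩ := hconst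
    -- construct ω
    have hdh : DifferentiableOn ℂ (deriv h) (ball (0:ℂ) 1) :=
      ((hhd.analyticOnNhd isOpen_ball).deriv).differentiableOn
    have hdg : DifferentiableOn ℂ (deriv g) (ball (0:ℂ) 1) :=
      ((hgd.analyticOnNhd isOpen_ball).deriv).differentiableOn
    obtain ⟨ω, hωd, hωb, hωeq⟩ := exists_omega hdh hdg hdn ⟨w₀, hw₀b, hw₀⟩
    set c : ℕ → ℂ := cf ω with hcdef
    have hHSc : HS c ω := HS_cf hωd
    have hc0 : ‖c 0‖ ≤ 1 := by
      have hs := hHSc 0 hmem0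
      have h1 : HasSum (fun n => c n * (0:ℂ) ^ n) ((fun n => c n * (0:ℂ)^n) 0) :=
        hasSum_single 0 (fun n hn => by simp [zero_pow hn])
      have h2 := hs.unique h1
      simp only [pow_zero, mul_one] at h2
      rw [← h2]
      exact hωb 0 hmem0
    have hck : ∀ j : ℕ, 1 ≤ j → ‖c j‖ ≤ 1 - ‖c 0‖^2 := fun j hj => coeff_bound hHSc hωb j hj
    have hak : ∀ k : ℕ, 1 ≤ k → ‖a k‖ ≤ 1 - ‖a 0‖^2 := fun k hk => coeff_bound hHSa hbn k hk
    -- coefficient identity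
    have hprod : HS (fun n => ∑ p ∈ Finset.HasAntidiagonal.antidiagonal n,
        c p.1 * (((p.2 : ℂ) + 1) * a (p.2+1))) (deriv g) := by
      have h1 := hHSc.mul hHSa.derivCoeff
      intro w hw
      have h2 := h1 w hw
      beta_reduce at h2
      rwa [← hωeq w hw] at h2
    have huniq := hHSb.derivCoeff.unique hprod
    -- summabilities
    have hsumA : Summable (fun k => ‖a (k+1)‖ * r^(k+1)) :=
      (summable_nat_add_iff 1).mpr (hHSa.summable_abs hr0 hr1)
    have hsumB : Summable (fun k => ‖b (k+1)‖ * r^(k+1)) :=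
      (summable_nat_add_iff 1).mpr (hHSb.summable_abs hr0 hr1)
    have hsumC : Summable (fun j => ‖c j‖ * r^j) := hHSc.summable_abs hr0 hr1
    have hgeom : Summable (fun k : ℕ => r^k) := summable_geometric_of_lt_one hr0 hr1
    have hgeom1 : Summable (fun k : ℕ => r^(k+1)) := (summable_nat_add_iff 1).mpr hgeom
    set A : ℝ := ∑' k, ‖a (k+1)‖ * r^(k+1) with hAdef
    set B : ℝ := ∑' k, ‖b (k+1)‖ * r^(k+1) with hBdef
    set C : ℝ := ∑' j, ‖c j‖ * r^j with hCdef
    have hA0 : 0 ≤ A := tsum_nonneg (fun k => by positivity)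
    have hB0 : 0 ≤ B := tsum_nonneg (fun k => by positivity)
    have hqq : (∑' k : ℕ, r^(k+1)) = r * (1-r)⁻¹ := by
      have h1 : (∑' k : ℕ, r^(k+1)) = ∑' k : ℕ, r * r^k :=
        tsum_congr (fun k => by ring)
      rw [h1, tsum_mul_left, tsum_geometric_of_lt_one hr0 hr1]
    have hq0 : 0 ≤ r * (1-r)⁻¹ := by
      have : (0:ℝ) < 1 - r := by linarith
      positivity
    have hq4 : r * (1-r)⁻¹ ≤ 1/4 := by
      have h1r : (0:ℝ) < 1 - r := by linarith
      rw [← div_eq_mul_inv, div_le_iff₀ h1r]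
      linarith
    -- A bound
    have hA_le : A ≤ (1 - ‖a 0‖^2) * (r * (1-r)⁻¹) := by
      rw [hAdef, ← hqq, ← tsum_mul_left]
      refine Summable.tsum_le_tsum (fun k => ?_) hsumA (hgeom1.mul_left _)
      exact mul_le_mul_of_nonneg_right (hak (k+1) (by omega)) (by positivity)
    -- C bound
    have hC_le : C ≤ 1 := by
      have hsplit : C = ‖c 0‖ * r^0 + ∑' j, ‖c (j+1)‖ * r^(j+1) := hsumC.tsum_eq_zero_add
      have htail : (∑' j, ‖c (j+1)‖ * r^(j+1)) ≤ (1 - ‖c 0‖^2) * (r * (1-r)⁻¹) := by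
        rw [← hqq, ← tsum_mul_left]
        refine Summable.tsum_le_tsum (fun j => ?_) ((summable_nat_add_iff 1).mpr hsumC)
          (hgeom1.mul_left _)
        exact mul_le_mul_of_nonneg_right (hck (j+1) (by omega)) (by positivity)
      rw [hsplit, pow_zero, mul_one]
      have hcsq : 0 ≤ 1 - ‖c 0‖^2 := by nlinarith [norm_nonneg (c 0)]
      have h2 : (1 - ‖c 0‖^2) * (r * (1-r)⁻¹) ≤ (1 - ‖c 0‖^2) * (1/4) :=
        mul_le_mul_of_nonneg_left hq4 hcsq
      nlinarith [norm_nonneg (c 0)]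
    -- B ≤ C * A
    have hB_le : B ≤ C * A := by
      set f : ℕ → ℝ := fun j => ‖c j‖ * r^j with hfdef
      set gg : ℕ → ℝ := fun m => ‖a (m+1)‖ * r^(m+1) with hggdef
      have hfn : (fun j => ‖f j‖) = f := funext fun j => Real.norm_of_nonneg (by positivity)
      have hgn : (fun m => ‖gg m‖) = gg := funext fun m => Real.norm_of_nonneg (by positivity)
      have hf1 : Summable (fun j => ‖f j‖) := by rw [hfn]; exact hsumC
      have hg1 : Summable (fun m => ‖gg m‖) := by rw [hgn]; exact hsumA
      have htsum := tsum_mul_tsum_eq_tsum_sum_antidiagonal_of_summable_norm hf1 hg1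
      have hCA : C * A = ∑' n, ∑ p ∈ Finset.HasAntidiagonal.antidiagonal n, f p.1 * gg p.2 := htsum
      rw [hBdef, hCA]
      refine Summable.tsum_le_tsum (fun k => ?_) hsumB
        ((summable_norm_sum_mul_antidiagonal_of_summable_norm hf1 hg1).of_norm)
      -- termwise bound
      have hid := congrFun huniq k
      have hnormid : ((k:ℝ)+1) * ‖b (k+1)‖
          ≤ ∑ p ∈ Finset.HasAntidiagonal.antidiagonal k, ‖c p.1‖ * (((p.2:ℝ)+1) * ‖a (p.2+1)‖) := by
        have h1 : ‖((k:ℂ)+1) * b (k+1)‖ = ((k:ℝ)+1) * ‖b (k+1)‖ := by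
          rw [norm_mul]
          congr 1
          have : ((k:ℂ)+1) = ((k+1 : ℕ) : ℂ) := by push_cast; ring
          rw [this, Complex.norm_natCast]
          push_cast; ring
        calc ((k:ℝ)+1) * ‖b (k+1)‖ = ‖((k:ℂ)+1) * b (k+1)‖ := h1.symm
          _ = ‖∑ p ∈ Finset.HasAntidiagonal.antidiagonal k, c p.1 * (((p.2:ℂ)+1) * a (p.2+1))‖ := by rw [hid]
          _ ≤ ∑ p ∈ Finset.HasAntidiagonal.antidiagonal k, ‖c p.1 * (((p.2:ℂ)+1) * a (p.2+1))‖ :=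
              norm_sum_le _ _
          _ = ∑ p ∈ Finset.HasAntidiagonal.antidiagonal k, ‖c p.1‖ * (((p.2:ℝ)+1) * ‖a (p.2+1)‖) := by
              refine Finset.sum_congr rfl (fun p _ => ?_)
              rw [norm_mul, norm_mul]
              congr 2
              have : ((p.2:ℂ)+1) = ((p.2+1 : ℕ) : ℂ) := by push_cast; ring
              rw [this, Complex.norm_natCast]
              push_cast; ring
      have hbk : ‖b (k+1)‖ ≤ ∑ p ∈ Finset.HasAntidiagonal.antidiagonal k, ‖c p.1‖ * ‖a (p.2+1)‖ := by
        have hk1 : (0:ℝ) < (k:ℝ)+1 := by positivity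
        rw [← mul_le_mul_iff_right₀ hk1]
        refine le_trans hnormid ?_
        rw [Finset.mul_sum]
        refine Finset.sum_le_sum (fun p hp => ?_)
        have hp2 : p.2 ≤ k := by
          have := Finset.HasAntidiagonal.mem_antidiagonal.mp hp
          omega
        have : ((p.2:ℝ)+1) ≤ ((k:ℝ)+1) := by
          have : (p.2 : ℝ) ≤ (k : ℝ) := by exact_mod_cast hp2
          linarith
        calc ‖c p.1‖ * (((p.2:ℝ)+1) * ‖a (p.2+1)‖)
            = ((p.2:ℝ)+1) * (‖c p.1‖ * ‖a (p.2+1)‖) := by ring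
          _ ≤ ((k:ℝ)+1) * (‖c p.1‖ * ‖a (p.2+1)‖) :=
              mul_le_mul_of_nonneg_right this (mul_nonneg (norm_nonneg _) (norm_nonneg _))
      calc ‖b (k+1)‖ * r^(k+1)
          ≤ (∑ p ∈ Finset.HasAntidiagonal.antidiagonal k, ‖c p.1‖ * ‖a (p.2+1)‖) * r^(k+1) :=
            mul_le_mul_of_nonneg_right hbk (by positivity)
        _ = ∑ p ∈ Finset.HasAntidiagonal.antidiagonal k, f p.1 * gg p.2 := by
            rw [Finset.sum_mul]
            refine Finset.sum_congr rfl (fun p hp => ?_)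
            have hpk := Finset.HasAntidiagonal.mem_antidiagonal.mp hp
            rw [hfdef, hggdef]
            simp only
            have : r^(k+1) = r^p.1 * r^(p.2+1) := by
              rw [← pow_add]
              congr 1
              omega
            rw [this]
            ring
    -- E bound
    have hzlt : ‖z‖ < 1 := lt_of_le_of_lt hzr hr1
    have hshift : HasSum (fun k => a (k+1) * z^(k+1)) (h z - a 0) := by
      have h1 := hHSa z hzball
      have h2 : HasSum (fun k => a k * z^k)
          ((h z - a 0) + ∑ i ∈ Finset.range 1, a i * z^i) := by
        simpa using h1
      exact (hasSum_nat_add_iff 1).mpr h2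
    have hsumnorm : Summable (fun k => ‖a (k+1) * z^(k+1)‖) := by
      have h1 : Summable (fun k => ‖a (k+1)‖ * ‖z‖^(k+1)) :=
        (summable_nat_add_iff 1).mpr (hHSa.summable_abs (norm_nonneg z) hzlt)
      have h2 : (fun k => ‖a (k+1) * z^(k+1)‖) = fun k => ‖a (k+1)‖ * ‖z‖^(k+1) :=
        funext fun k => by rw [norm_mul, norm_pow]
      rw [h2]; exact h1
    have hE : ‖h z - a 0‖ ≤ A := by
      calc ‖h z - a 0‖ = ‖∑' k, a (k+1) * z^(k+1)‖ := by rw [hshift.tsum_eq]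
        _ ≤ ∑' k, ‖a (k+1) * z^(k+1)‖ := norm_tsum_le_tsum_norm hsumnorm
        _ ≤ A := by
            refine Summable.tsum_le_tsum (fun k => ?_) hsumnorm hsumA
            rw [norm_mul, norm_pow]
            exact mul_le_mul_of_nonneg_left
              (pow_le_pow_left₀ (norm_nonneg z) hzr (k+1)) (norm_nonneg _)
    -- assemble
    have hsplitT : (∑' k : ℕ, (‖a (k+1)‖ + ‖b (k+1)‖) * r ^ (k+1)) = A + B := by
      rw [hAdef, hBdef, ← hsumA.tsum_add hsumB]
      exact tsum_congr (fun k => by ring)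
    rw [hsplitT]
    set u : ℝ := (1 - ‖a 0‖^2) * (r * (1-r)⁻¹) with hudef
    have hu0 : 0 ≤ u := by
      have : 0 ≤ 1 - ‖a 0‖^2 := by nlinarith [norm_nonneg (a 0)]
      positivity
    have hAu : A ≤ u := hA_le
    have hBu : B ≤ u := by
      calc B ≤ C * A := hB_le
        _ ≤ 1 * A := mul_le_mul_of_nonneg_right hC_le hA0
        _ = A := one_mul A
        _ ≤ u := hAu
    have hEu : ‖h z - a 0‖^2 ≤ u^2 := by
      have := le_trans hE hAu
      exact pow_le_pow_left₀ (norm_nonneg _) this 2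
    have h4u : 4*u ≤ (1 - ‖a 0‖)*(1 + ‖a 0‖) := by
      have h1 : 0 ≤ 1 - ‖a 0‖^2 := by nlinarith [norm_nonneg (a 0)]
      have h2 : 4 * (r * (1-r)⁻¹) ≤ 1 := by linarith [hq4]
      nlinarith [h1, hq0]
    have hfinal : ‖a 0‖ + (u + u) + u^2 ≤ 1 := by
      nlinarith [sq_nonneg u, sq_nonneg (1-‖a 0‖), mul_nonneg hu0 (sub_nonneg.mpr ha0),
        mul_nonneg (mul_nonneg hu0 hu0) (norm_nonneg (a 0)), sq_nonneg (1+‖a 0‖),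
        norm_nonneg (a 0)]
    linarith [hAu, hBu, hEu, hfinal]
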